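/- Let α₁, ..., α_k be k linearly independent vectors in ℤ^E, and let X = (X_e)_{e∈E} be independent real random variables each with density bounded by φ. Then for any measurable sets J₁, ..., J_k ⊂ ℝ each of Lebesgue measure at most ε, the probability that ⟨α_i, X⟩ ∈ J_i for all i ≤ k is at most (φε)^k. -/

import Mathlib

open MeasureTheory ProbabilityTheory
open scoped ENNReal

private lemma aux_prod_le {X Y : Type*} [MeasurableSpace X] [MeasurableSpace Y]
    {μ₁ m₁ : Measure X} {μ₂ m₂ : Measure Y} [SigmaFinite μ₂] [SigmaFinite m₂]
    {c₁ c₂ : ℝ≥0∞} (h₁ : μ₁ ≤ c₁ • m₁) (h₂ : μ₂ ≤ c₂ • m₂)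
    {s : Set (X × Y)} (hs : MeasurableSet s) :
    μ₁.prod μ₂ s ≤ c₁ * c₂ * m₁.prod m₂ s := by
  rw [Measure.prod_apply hs, Measure.prod_apply hs]
  calc ∫⁻ x, μ₂ (Prod.mk x ⁻¹' s) ∂μ₁
      ≤ ∫⁻ x, c₂ * m₂ (Prod.mk x ⁻¹' s) ∂μ₁ := by
        refine lintegral_mono fun x => ?_
        simpa using Measure.le_iff'.1 h₂ (Prod.mk x ⁻¹' s)
    _ ≤ ∫⁻ x, c₂ * m₂ (Prod.mk x ⁻¹' s) ∂(c₁ • m₁) := lintegral_mono' h₁ le_rfl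
    _ = c₁ * ∫⁻ x, c₂ * m₂ (Prod.mk x ⁻¹' s) ∂m₁ := lintegral_smul_measure _ _
    _ = c₁ * (c₂ * ∫⁻ x, m₂ (Prod.mk x ⁻¹' s) ∂m₁) := by
        rw [lintegral_const_mul _ (measurable_measure_prodMk_left hs)]
    _ = c₁ * c₂ * ∫⁻ x, m₂ (Prod.mk x ⁻¹' s) ∂m₁ := by rw [mul_assoc]

private lemma aux_pi_le : ∀ (n : ℕ) (μ : Fin n → Measure ℝ), (∀ i, SigmaFinite (μ i)) →
    ∀ (c : ℝ≥0∞), (∀ i, μ i ≤ c • (volume : Measure ℝ)) → ∀ (s : Set (Fin n → ℝ)),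
    MeasurableSet s →
    Measure.pi μ s ≤ c ^ n * Measure.pi (fun _ => (volume : Measure ℝ)) s := by
  intro n
  induction n with
  | zero =>
    intro μ hσ c hc s hs
    haveI := hσ
    rcases s.eq_empty_or_nonempty with rfl | hne
    · simp
    · rw [hne.eq_univ]
      simp [Measure.pi_univ]
  | succ n ih =>
    intro μ hσ c hc s hs
    haveI := hσ
    set e := MeasurableEquiv.piFinSuccAbove (fun _ : Fin (n + 1) => ℝ) 0 with he
    have hmp := measurePreserving_piFinSuccAbove μ 0
    have hvol := measurePreserving_piFinSuccAbove (fun _ : Fin (n + 1) => (volume : Measure ℝ)) 0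
    have h1 : Measure.pi μ s
        = ((μ 0).prod (Measure.pi fun j => μ ((0 : Fin (n + 1)).succAbove j))) (e.symm ⁻¹' s) :=
      ((hmp.symm _).measure_preimage hs.nullMeasurableSet).symm
    have h2 : Measure.pi (fun _ : Fin (n + 1) => (volume : Measure ℝ)) s
        = ((volume : Measure ℝ).prod
            (Measure.pi fun _ : Fin n => (volume : Measure ℝ))) (e.symm ⁻¹' s) :=
      ((hvol.symm _).measure_preimage hs.nullMeasurableSet).symm
    rw [h1, h2]
    have hle : (Measure.pi fun j => μ ((0 : Fin (n + 1)).succAbove j))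
        ≤ c ^ n • Measure.pi (fun _ : Fin n => (volume : Measure ℝ)) := by
      rw [Measure.le_iff]
      intro t ht
      simpa using ih (fun j => μ _) (fun j => hσ _) c (fun j => hc _) t ht
    calc ((μ 0).prod (Measure.pi fun j => μ ((0 : Fin (n + 1)).succAbove j))) (e.symm ⁻¹' s)
        ≤ c * c ^ n * ((volume : Measure ℝ).prod
            (Measure.pi fun _ : Fin n => (volume : Measure ℝ))) (e.symm ⁻¹' s) :=
          aux_prod_le (hc 0) hle (e.symm.measurable hs)
      _ = c ^ (n + 1) * ((volume : Measure ℝ).prod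
            (Measure.pi fun _ : Fin n => (volume : Measure ℝ))) (e.symm ⁻¹' s) := by
          rw [pow_succ, mul_comm (c ^ n) c]

private lemma aux_select {E : Type*} [Fintype E] {k : ℕ} (α : Fin k → E → ℤ)
    (hα : LinearIndependent ℝ (fun i => fun e => (α i e : ℝ))) :
    ∃ f : Fin k → E, Function.Injective f ∧
      (Matrix.of fun i j => (α i (f j) : ℝ)).det ≠ 0 := by
  classical
  set M : Matrix (Fin k) E ℝ := Matrix.of fun i e => (α i e : ℝ) with hMdef
  have hM : LinearIndependent ℝ (fun i => M i) := hα
  have hrank : M.rank = k := by simpa using hM.rank_matrix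
  have hspan : Submodule.span ℝ (Set.range M.transpose) = ⊤ := by
    apply Submodule.eq_top_of_finrank_eq
    change Module.finrank ℝ (Submodule.span ℝ (Set.range M.col)) = _
    rw [← Matrix.rank_eq_finrank_span_cols, hrank, Module.finrank_fintype_fun_eq_card,
      Fintype.card_fin]
  obtain ⟨b, hbsub, hbspan, hbli⟩ := exists_linearIndependent ℝ (Set.range M.transpose)
  rw [hspan] at hbspan
  haveI : Fintype b := hbli.setFinite.fintype
  have hcard : Fintype.card b = k := by
    have h1 : Module.finrank ℝ (Submodule.span ℝ b) = b.toFinset.card :=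
      finrank_span_set_eq_card hbli
    rw [hbspan, finrank_top, Module.finrank_fintype_fun_eq_card, Fintype.card_fin] at h1
    rw [← Set.toFinset_card, ← h1]
  let q : Fin k ≃ b := (Fintype.equivFinOfCardEq hcard).symm
  have hmem : ∀ x : b, (x : Fin k → ℝ) ∈ Set.range M.transpose := fun x => hbsub x.2
  choose pick hpick using hmem
  refine ⟨fun j => pick (q j), ?_, ?_⟩
  · intro j₁ j₂ h
    have h' : ((q j₁ : Fin k → ℝ)) = (q j₂ : Fin k → ℝ) := by
      rw [← hpick (q j₁), ← hpick (q j₂)]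
      exact congrArg M.transpose h
    exact q.injective (Subtype.coe_injective h')
  · set N : Matrix (Fin k) (Fin k) ℝ := Matrix.of fun i j => (α i (pick (q j)) : ℝ) with hN
    have hcols : (fun j => N.transpose j) = (fun j => ((q j : Fin k → ℝ))) := by
      funext j
      ext i
      have := congrFun (hpick (q j)) i
      simpa [hN, hMdef, Matrix.transpose] using this
    have hli : LinearIndependent ℝ (fun j => N.transpose j) := by
      rw [hcols]
      exact hbli.comp q q.injective
    have hunit : IsUnit N := Matrix.linearIndependent_cols_iff_isUnit.mp hli
    exact ((Matrix.isUnit_iff_isUnit_det N).mp hunit).ne_zero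

/-- Lemma A.1 of Etscheid–Röglin: if `α 1, …, α k` are linearly independent integer
vectors in `ℤ^E` and `X = (X e)` are independent real random variables, each with
density bounded by `φ`, then for measurable sets `J i` of Lebesgue measure at most `ε`,
the probability that `⟨α i, X⟩ ∈ J i` for all `i` is at most `(φ ε)^k`. -/
theorem stmt0 {Ω : Type*} [MeasureSpace Ω] [IsProbabilityMeasure (ℙ : Measure Ω)]
    {E : Type*} [Fintype E] {k : ℕ}
    (X : E → Ω → ℝ) (hXmeas : ∀ e, Measurable (X e))
    (hindep : iIndepFun X ℙ)
    (φ : ℝ≥0∞)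
    (hdens : ∀ e, Measure.map (X e) ℙ ≤ φ • (volume : Measure ℝ))
    (α : Fin k → E → ℤ)
    (hα : LinearIndependent ℝ (fun i => fun e => (α i e : ℝ)))
    (ε : ℝ≥0∞) (J : Fin k → Set ℝ)
    (hJm : ∀ i, MeasurableSet (J i)) (hJ : ∀ i, volume (J i) ≤ ε) :
    ℙ {ω | ∀ i, (∑ e, (α i e : ℝ) * X e ω) ∈ J i} ≤ (φ * ε) ^ k := by
  classical
  set ν : E → Measure ℝ := fun e => Measure.map (X e) ℙ with hν
  haveI : ∀ e, IsProbabilityMeasure (ν e) :=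
    fun e => Measure.isProbabilityMeasure_map (hXmeas e).aemeasurable
  have hXm : Measurable fun ω => fun e => X e ω := measurable_pi_lambda _ fun e => hXmeas e
  set A : Set (E → ℝ) := {x | ∀ i, (∑ e, (α i e : ℝ) * x e) ∈ J i} with hA
  have hsummeas : ∀ i, Measurable fun x : E → ℝ => ∑ e, (α i e : ℝ) * x e := fun i =>
    Finset.measurable_sum _ fun e _ => (measurable_pi_apply e).const_mul _
  have hAmeas : MeasurableSet A := by
    have hAeq : A = ⋂ i, (fun x : E → ℝ => ∑ e, (α i e : ℝ) * x e) ⁻¹' J i := by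
      ext x; simp [hA]
    rw [hAeq]
    exact MeasurableSet.iInter fun i => (hsummeas i) (hJm i)
  have hjoint : Measure.map (fun ω => fun e => X e ω) ℙ = Measure.pi ν := by
    refine (Measure.pi_eq fun s hs => ?_).symm
    rw [Measure.map_apply hXm (MeasurableSet.univ_pi hs)]
    have hpre : (fun ω => fun e => X e ω) ⁻¹' Set.pi Set.univ s
        = ⋂ e ∈ Finset.univ, X e ⁻¹' s e := by
      ext ω; simp [Set.mem_pi]
    rw [hpre, hindep.measure_inter_preimage_eq_mul Finset.univ (fun e _ => hs e)]
    exact Finset.prod_congr rfl fun e _ => (Measure.map_apply (hXmeas e) (hs e)).symm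
  have hLHS : ℙ {ω | ∀ i, (∑ e, (α i e : ℝ) * X e ω) ∈ J i} = Measure.pi ν A := by
    rw [← hjoint, Measure.map_apply hXm hAmeas]
    rfl
  rw [hLHS]
  -- choose k coordinates on which the α's restrict to an invertible integer matrix
  obtain ⟨f, hfinj, hdet⟩ := aux_select α hα
  set Nr : Matrix (Fin k) (Fin k) ℝ := Matrix.of fun i j => (α i (f j) : ℝ) with hNr
  have hdet' : Nr.det ≠ 0 := hdet
  have habs : (1 : ℝ) ≤ |Nr.det| := by
    set Nz : Matrix (Fin k) (Fin k) ℤ := Matrix.of fun i j => α i (f j) with hNz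
    have hcast : ((Nz.det : ℤ) : ℝ) = Nr.det := by
      have h := RingHom.map_det (Int.castRingHom ℝ) Nz
      have h2 : ((Int.castRingHom ℝ).mapMatrix Nz) = Nr := by
        ext i j
        simp [hNz, hNr]
      rw [h2] at h
      simpa using h
    have hz : Nz.det ≠ 0 := by
      intro h0
      exact hdet' (by rw [← hcast, h0, Int.cast_zero])
    have h1 : (1 : ℤ) ≤ |Nz.det| := Int.one_le_abs hz
    calc (1 : ℝ) ≤ |((Nz.det : ℤ) : ℝ)| := by exact_mod_cast h1
      _ = |Nr.det| := by rw [hcast]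
  -- split the coordinates into `range f` and its complement; keep `p` opaque so that
  -- typeclass instances are chosen consistently
  obtain ⟨p, hpdef⟩ : ∃ p : E → Prop, p = fun e => e ∈ Set.range f := ⟨_, rfl⟩
  have hpe : ∀ e, p e = (e ∈ Set.range f) := fun e => congrFun hpdef e
  have hpf : ∀ j, p (f j) := fun j => by rw [hpe]; exact ⟨j, rfl⟩
  have hpsurj : ∀ t : {e // p e}, ∃ j, f j = (t : E) := fun t => cast (hpe (t : E)) t.2
  set esp := MeasurableEquiv.piEquivPiSubtypeProd (fun _ : E => ℝ) p with hesp
  set q : Fin k ≃ {e // p e} :=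
    Equiv.ofBijective (fun j => (⟨f j, hpf j⟩ : {e // p e}))
      ⟨fun j₁ j₂ h => hfinj (congrArg Subtype.val h),
       fun t => by obtain ⟨j, hj⟩ := hpsurj t; exact ⟨j, Subtype.ext hj⟩⟩ with hq
  have hmps := measurePreserving_piEquivPiSubtypeProd ν p
  have hBmeas : MeasurableSet (esp.symm ⁻¹' A) := esp.symm.measurable hAmeas
  have hsplit : Measure.pi ν A
      = ((Measure.pi fun e : Subtype p => ν e).prod
          (Measure.pi fun e : {e // ¬p e} => ν e)) (esp.symm ⁻¹' A) :=
    ((hmps.symm _).measure_preimage hAmeas.nullMeasurableSet).symm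
  rw [hsplit, Measure.prod_apply_symm hBmeas]
  have hslice : ∀ y : {e // ¬p e} → ℝ,
      (Measure.pi fun e : Subtype p => ν e) ((fun x => (x, y)) ⁻¹' (esp.symm ⁻¹' A))
        ≤ (φ * ε) ^ k := by
    intro y
    set c : Fin k → ℝ := fun i => ∑ e : {e // ¬p e}, (α i e : ℝ) * y e with hc
    set K : Fin k → Set ℝ := fun i => (fun z => z + c i) ⁻¹' J i with hK
    have hKm : ∀ i, MeasurableSet (K i) := fun i => (measurable_add_const _) (hJm i)
    have hSl : MeasurableSet ((fun x => (x, y)) ⁻¹' (esp.symm ⁻¹' A)) :=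
      (measurable_id.prodMk measurable_const) hBmeas
    set PC := MeasurableEquiv.piCongrLeft (fun _ : Subtype p => ℝ) q with hPC
    have hmpc := measurePreserving_piCongrLeft (fun e : Subtype p => ν e) q
    have htrans : (Measure.pi fun e : Subtype p => ν e)
          ((fun x => (x, y)) ⁻¹' (esp.symm ⁻¹' A))
        = (Measure.pi fun j : Fin k => ν (f j))
            (PC ⁻¹' ((fun x => (x, y)) ⁻¹' (esp.symm ⁻¹' A))) :=
      (hmpc.measure_preimage hSl.nullMeasurableSet).symm
    have hsum : ∀ (i : Fin k) (w : Fin k → ℝ),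
        (∑ e, (α i e : ℝ) * (esp.symm (PC w, y)) e) = Nr.mulVec w i + c i := by
      intro i w
      have hzval : ∀ e : E, (esp.symm (PC w, y)) e
          = if h : p e then PC w ⟨e, h⟩ else y ⟨e, h⟩ := fun e => rfl
      have hterm : ∀ j, (α i ((q j : Subtype p) : E) : ℝ)
          * (esp.symm (PC w, y)) ((q j : Subtype p) : E) = Nr i j * w j := by
        intro j
        have h1 : (esp.symm (PC w, y)) ((q j : Subtype p) : E) = w j := by
          rw [hzval, dif_pos (q j).2]
          have h2 : (⟨((q j : Subtype p) : E), (q j).2⟩ : Subtype p) = q j :=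
            Subtype.ext rfl
          rw [h2]
          exact MeasurableEquiv.piCongrLeft_apply_apply (β := fun _ : Subtype p => ℝ) q w j
        rw [h1]
        rfl
      calc (∑ e, (α i e : ℝ) * (esp.symm (PC w, y)) e)
          = (∑ e : Subtype p, (α i (e : E) : ℝ) * (esp.symm (PC w, y)) (e : E))
            + ∑ e : {e // ¬p e}, (α i (e : E) : ℝ) * (esp.symm (PC w, y)) (e : E) :=
            (Fintype.sum_subtype_add_sum_subtype p
              (fun e => (α i e : ℝ) * (esp.symm (PC w, y)) e)).symm
        _ = Nr.mulVec w i + c i := by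
            congr 1
            · calc (∑ e : Subtype p, (α i (e : E) : ℝ) * (esp.symm (PC w, y)) (e : E))
                  = ∑ j, (α i ((q j : Subtype p) : E) : ℝ)
                      * (esp.symm (PC w, y)) ((q j : Subtype p) : E) :=
                  (Equiv.sum_comp q fun e : Subtype p =>
                    (α i (e : E) : ℝ) * (esp.symm (PC w, y)) (e : E)).symm
                _ = ∑ j, Nr i j * w j := Finset.sum_congr rfl fun j _ => hterm j
                _ = Nr.mulVec w i := by simp [Matrix.mulVec, dotProduct]
            · exact Finset.sum_congr rfl fun e _ => by rw [hzval, dif_neg e.2]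
    have hDeq : PC ⁻¹' ((fun x => (x, y)) ⁻¹' (esp.symm ⁻¹' A))
        = (Matrix.toLin' Nr) ⁻¹' (Set.univ.pi K) := by
      ext w
      simp only [Set.mem_preimage, hA, Set.mem_setOf_eq, Set.mem_univ_pi]
      refine forall_congr' fun i => ?_
      rw [hsum i w]
      simp [hK, Matrix.toLin'_apply]
    have hLmeas : Measurable (Matrix.toLin' Nr) :=
      (LinearMap.continuous_on_pi _).measurable
    have hDmeas : MeasurableSet ((Matrix.toLin' Nr) ⁻¹' (Set.univ.pi K)) :=
      hLmeas (MeasurableSet.univ_pi hKm)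
    have hvolD : (volume : Measure (Fin k → ℝ)) ((Matrix.toLin' Nr) ⁻¹' (Set.univ.pi K))
        ≤ ε ^ k := by
      have hmapvol := Real.map_matrix_volume_pi_eq_smul_volume_pi hdet'
      have h1 : Measure.map (Matrix.toLin' Nr) volume (Set.univ.pi K)
          = volume ((Matrix.toLin' Nr) ⁻¹' (Set.univ.pi K)) :=
        Measure.map_apply hLmeas (MeasurableSet.univ_pi hKm)
      rw [hmapvol] at h1
      rw [← h1, Measure.smul_apply, smul_eq_mul]
      have h2 : (volume : Measure (Fin k → ℝ)) (Set.univ.pi K) = ∏ i, volume (K i) :=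
        volume_pi_pi K
      have h3 : ∀ i, volume (K i) = volume (J i) := fun i =>
        measure_preimage_add_right volume (c i) (J i)
      calc ENNReal.ofReal |Nr.det⁻¹| * (volume : Measure (Fin k → ℝ)) (Set.univ.pi K)
          ≤ 1 * (volume : Measure (Fin k → ℝ)) (Set.univ.pi K) := by
            gcongr
            refine ENNReal.ofReal_le_one.mpr ?_
            rw [abs_inv]
            exact inv_le_one_of_one_le₀ habs
        _ = ∏ i, volume (K i) := by rw [one_mul, h2]
        _ ≤ ∏ _i : Fin k, ε := Finset.prod_le_prod' fun i _ => (h3 i) ▸ hJ i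
        _ = ε ^ k := by rw [Finset.prod_const, Finset.card_univ, Fintype.card_fin]
    have hbound := aux_pi_le k (fun j => ν (f j)) (fun j => inferInstance) φ
      (fun j => hdens (f j)) _ hDmeas
    rw [htrans, hDeq]
    calc (Measure.pi fun j : Fin k => ν (f j)) ((Matrix.toLin' Nr) ⁻¹' (Set.univ.pi K))
        ≤ φ ^ k * Measure.pi (fun _ : Fin k => (volume : Measure ℝ))
            ((Matrix.toLin' Nr) ⁻¹' (Set.univ.pi K)) := hbound
      _ ≤ φ ^ k * ε ^ k := by gcongr; exact hvolD
      _ = (φ * ε) ^ k := (mul_pow φ ε k).symm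
  calc ∫⁻ y, (Measure.pi fun e : Subtype p => ν e)
        ((fun x => (x, y)) ⁻¹' (esp.symm ⁻¹' A)) ∂(Measure.pi fun e : {e // ¬p e} => ν e)
      ≤ ∫⁻ _y, (φ * ε) ^ k ∂(Measure.pi fun e : {e // ¬p e} => ν e) :=
        lintegral_mono fun y => hslice y
    _ = (φ * ε) ^ k := by
        rw [lintegral_const, measure_univ, mul_one]
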